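/- For n ≥ 2, every induced-Λ₂-saturated family in B_n is also induced-D₂-saturated in B_n and contains ∅; consequently isat(n, Λ₂) ≥ n + 1. -/

import Mathlib

/-- `X` and `Y` are incomparable under inclusion. -/
def Incomp {n : ℕ} (X Y : Finset (Fin n)) : Prop :=
  ¬ X ⊆ Y ∧ ¬ Y ⊆ X

/-- `F` contains an induced copy of `Λ₂`: a set above two incomparable sets. -/
def L2Copy {n : ℕ} (F : Finset (Finset (Fin n))) : Prop :=
  ∃ a ∈ F, ∃ b ∈ F, ∃ c ∈ F, a ⊂ c ∧ b ⊂ c ∧ Incomp a b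

/-- `F` is induced-`Λ₂`-saturated in `B_n`. -/
def L2Saturated {n : ℕ} (F : Finset (Finset (Fin n))) : Prop :=
  ¬ L2Copy F ∧ ∀ S ∉ F, L2Copy (insert S F)

/-- `F` contains an induced copy of the diamond `D₂`. -/
def D2Copy {n : ℕ} (F : Finset (Finset (Fin n))) : Prop :=
  ∃ A ∈ F, ∃ B ∈ F, ∃ C ∈ F, ∃ D ∈ F,
    A ⊂ B ∧ B ⊂ D ∧ A ⊂ C ∧ C ⊂ D ∧ Incomp B C

/-- `F` is induced-`D₂`-saturated in `B_n`. -/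
def D2Saturated {n : ℕ} (F : Finset (Finset (Fin n))) : Prop :=
  ¬ D2Copy F ∧ ∀ S ∉ F, D2Copy (insert S F)

section Aux

variable {n : ℕ}

private lemma sstrans {a b c : Finset (Fin n)} (h1 : a ⊂ b) (h2 : b ⊂ c) : a ⊂ c :=
  Finset.lt_iff_ssubset.1 (lt_trans (Finset.lt_iff_ssubset.2 h1) (Finset.lt_iff_ssubset.2 h2))

private lemma ssub_of_ssub_of_sub {a b c : Finset (Fin n)} (h1 : a ⊂ b) (h2 : b ⊆ c) : a ⊂ c :=
  Finset.lt_iff_ssubset.1 (lt_of_lt_of_le (Finset.lt_iff_ssubset.2 h1) (Finset.le_iff_subset.2 h2))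

/-- From Λ₂-freeness: two members strictly below a common member are comparable. -/
private lemma free_of {F : Finset (Finset (Fin n))} (hfree : ¬ L2Copy F)
    {a b c : Finset (Fin n)} (ha : a ∈ F) (hb : b ∈ F) (hc : c ∈ F)
    (hac : a ⊂ c) (hbc : b ⊂ c) : a ⊆ b ∨ b ⊆ a := by
  by_contra h
  push_neg at h
  exact hfree ⟨a, ha, b, hb, c, hc, hac, hbc, h.1, h.2⟩

/-- Every Λ₂-saturated family contains the empty set. -/
lemma L2Saturated.empty_mem {F : Finset (Finset (Fin n))} (hF : L2Saturated F) : ∅ ∈ F := by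
  by_contra h
  obtain ⟨a, ha, b, hb, c, hc, hac, hbc, h1, h2⟩ := hF.2 ∅ h
  have haF : a ∈ F := by
    rcases Finset.mem_insert.1 ha with rfl | ha'
    · exact absurd (Finset.empty_subset b) h1
    · exact ha'
  have hbF : b ∈ F := by
    rcases Finset.mem_insert.1 hb with rfl | hb'
    · exact absurd (Finset.empty_subset a) h2
    · exact hb'
  have hcF : c ∈ F := by
    rcases Finset.mem_insert.1 hc with rfl | hc'
    · have ha0 : a = ∅ := Finset.subset_empty.1 hac.subset
      exact absurd (by rw [ha0]; exact Finset.empty_subset b) h1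
    · exact hc'
  exact hF.1 ⟨a, haF, b, hbF, c, hcF, hac, hbc, h1, h2⟩

/-- Key lemma: in a Λ₂-saturated family, for every coordinate `x` there is a member `e`
containing `x` with `e \ {x}` also a member.  Proved by a "parent climbing" argument. -/
private lemma no_bad_x {F : Finset (Finset (Fin n))} (hfree : ¬ L2Copy F)
    (hsat : ∀ S ∉ F, L2Copy (insert S F)) (hempty : (∅ : Finset (Fin n)) ∈ F)
    (x : Fin n) (hx : ∀ e ∈ F, x ∈ e → e.erase x ∉ F) : False := by
  classical
  -- every member containing x has a "parent": the maximum member strictly below it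
  have parent : ∀ v ∈ F, x ∈ v → ∃ u ∈ F, u ⊂ v ∧ ∀ w ∈ F, w ⊂ v → w ⊆ u := by
    intro v hv hxv
    have hne : (F.filter (· ⊂ v)).Nonempty :=
      ⟨∅, Finset.mem_filter.2 ⟨hempty, Finset.empty_ssubset.2 ⟨x, hxv⟩⟩⟩
    obtain ⟨u, hu, hmax⟩ := (by obtain ⟨m, hm⟩ := Finset.exists_maximal hne; exact ⟨m, hm.1, fun w hw h => lt_irrefl _ (lt_of_lt_of_le h (hm.2 hw h.le))⟩ : ∃ m ∈ F.filter (· ⊂ v), ∀ w ∈ F.filter (· ⊂ v), ¬ m < w)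
    rw [Finset.mem_filter] at hu
    refine ⟨u, hu.1, hu.2, fun w hw hwv => ?_⟩
    rcases free_of hfree hw hu.1 hv hwv hu.2 with h | h
    · exact h
    · by_cases hew : u = w
      · rw [hew]
      · exact absurd (Finset.lt_iff_ssubset.2 (Finset.ssubset_iff_subset_ne.2 ⟨h, hew⟩))
          (hmax w (Finset.mem_filter.2 ⟨hw, hwv⟩))
  -- below any member containing x there is a minimal member containing x
  have minimal : ∀ d ∈ F, x ∈ d →
      ∃ v ∈ F, x ∈ v ∧ v ⊆ d ∧ ∀ w ∈ F, x ∈ w → ¬ w ⊂ v := by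
    intro d hd hxd
    have hne : (F.filter (fun w => x ∈ w ∧ w ⊆ d)).Nonempty :=
      ⟨d, Finset.mem_filter.2 ⟨hd, hxd, Finset.Subset.refl d⟩⟩
    obtain ⟨v, hv, hmin⟩ := (by obtain ⟨m, hm⟩ := Finset.exists_minimal hne; exact ⟨m, hm.1, fun w hw h => lt_irrefl _ (lt_of_lt_of_le h (hm.2 hw h.le))⟩ : ∃ m ∈ F.filter (fun w => x ∈ w ∧ w ⊆ d), ∀ w ∈ F.filter (fun w => x ∈ w ∧ w ⊆ d), ¬ w < m)
    rw [Finset.mem_filter] at hv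
    refine ⟨v, hv.1, hv.2.1, hv.2.2, fun w hw hxw hwv => ?_⟩
    exact hmin w (Finset.mem_filter.2 ⟨hw, hxw, hwv.subset.trans hv.2.2⟩)
      (Finset.lt_iff_ssubset.2 hwv)
  -- some member contains x
  have hxmem : ∃ d ∈ F, x ∈ d := by
    have hsing : ({x} : Finset (Fin n)) ∉ F := fun h =>
      hx {x} h (Finset.mem_singleton_self x) (by rwa [Finset.erase_singleton])
    obtain ⟨a, ha, b, hb, c, hc, hac, hbc, h1, h2⟩ := hsat {x} hsing
    rcases Finset.mem_insert.1 hc with rfl | hcF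
    · have ha0 : a = ∅ := by
        have : a ≠ ({x} : Finset (Fin n)) := hac.ne
        rcases Finset.subset_singleton_iff.1 hac.subset with h | h
        · exact h
        · exact absurd h this
      have hb0 : b = ∅ := by
        have : b ≠ ({x} : Finset (Fin n)) := hbc.ne
        rcases Finset.subset_singleton_iff.1 hbc.subset with h | h
        · exact h
        · exact absurd h this
      rw [ha0, hb0] at h1
      exact absurd (Finset.Subset.refl ∅) h1
    · rcases Finset.mem_insert.1 ha with rfl | haF
      · exact ⟨c, hcF, hac.subset (Finset.mem_singleton_self x)⟩
      · rcases Finset.mem_insert.1 hb with rfl | hbF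
        · exact ⟨c, hcF, hbc.subset (Finset.mem_singleton_self x)⟩
        · exact (hfree ⟨a, haF, b, hbF, c, hcF, hac, hbc, h1, h2⟩).elim
  -- the finite set of pairs (v, u): v a minimal member containing x, u its parent
  set PP := (F ×ˢ F).filter (fun p =>
      (x ∈ p.1 ∧ ∀ w ∈ F, x ∈ w → ¬ w ⊂ p.1) ∧
      (p.2 ⊂ p.1 ∧ ∀ w ∈ F, w ⊂ p.1 → w ⊆ p.2)) with hPPdef
  have hPPne : PP.Nonempty := by
    obtain ⟨d, hd, hxd⟩ := hxmem
    obtain ⟨v, hvF, hxv, _, hvmin⟩ := minimal d hd hxd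
    obtain ⟨u, huF, huv, hupar⟩ := parent v hvF hxv
    exact ⟨(v, u), Finset.mem_filter.2
      ⟨Finset.mem_product.2 ⟨hvF, huF⟩, ⟨hxv, hvmin⟩, huv, hupar⟩⟩
  -- choose a pair with the largest parent
  obtain ⟨p, hp, hpmax⟩ := Finset.exists_max_image PP (fun p => p.2.card) hPPne
  obtain ⟨v, u⟩ := p
  rw [Finset.mem_filter] at hp
  obtain ⟨hpmem, ⟨hxv, hvmin⟩, huv, hupar⟩ := hp
  have hvF : v ∈ F := (Finset.mem_product.1 hpmem).1
  have huF : u ∈ F := (Finset.mem_product.1 hpmem).2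
  have hxu : x ∉ u := fun hxu => hvmin u huF hxu huv
  have hvx : v.erase x ∉ F := hx v hvF hxv
  -- the query set s = u ∪ {x}, strictly between u and v, not a member
  have hsv : insert x u ⊂ v := by
    have hsub : insert x u ⊆ v := Finset.insert_subset hxv huv.subset
    refine Finset.ssubset_iff_subset_ne.2 ⟨hsub, fun h => ?_⟩
    apply hvx
    rw [← h, Finset.erase_insert hxu]
    exact huF
  have hsF : insert x u ∉ F := fun h =>
    hxu ((hupar _ h hsv) (Finset.mem_insert_self x u))
  -- the leg case of saturation at s leads to a pair with strictly larger parent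
  have cont : ∀ c ∈ F, ∀ b ∈ F, insert x u ⊂ c → b ⊂ c →
      ¬ insert x u ⊆ b → ¬ b ⊆ insert x u → False := by
    intro c hc b hb hsc hbc hnsb hnbs
    have husc : u ⊂ c := sstrans (Finset.ssubset_insert hxu) hsc
    have hub : u ⊂ b := by
      rcases free_of hfree huF hb hc husc hbc with h | h
      · refine Finset.ssubset_iff_subset_ne.2 ⟨h, fun he => hnbs ?_⟩
        rw [← he]
        exact Finset.subset_insert x u
      · exact absurd (h.trans (Finset.subset_insert x u)) hnbs
    have hxb : x ∉ b := fun hxb => hnsb (Finset.insert_subset hxb hub.subset)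
    have hxc : x ∈ c := hsc.subset (Finset.mem_insert_self x u)
    obtain ⟨v', hv'F, hxv', hv'c, hv'min⟩ := minimal c hc hxc
    have hbv' : b ⊂ v' := by
      rcases hv'c.ssubset_or_eq with h | rfl
      · rcases free_of hfree hb hv'F hc hbc h with h2 | h2
        · exact Finset.ssubset_iff_subset_ne.2 ⟨h2, fun he => hxb (he ▸ hxv')⟩
        · exact absurd (h2 hxv') hxb
      · exact hbc
    obtain ⟨u', hu'F, hu'v', hu'par⟩ := parent v' hv'F hxv'
    have huu' : u ⊂ u' := ssub_of_ssub_of_sub hub (hu'par b hb hbv')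
    have hcard : u.card < u'.card := Finset.card_lt_card huu'
    have hPP' : (v', u') ∈ PP := Finset.mem_filter.2
      ⟨Finset.mem_product.2 ⟨hv'F, hu'F⟩, ⟨hxv', hv'min⟩, hu'v', hu'par⟩
    have hle : u'.card ≤ u.card := hpmax (v', u') hPP'
    omega
  -- saturation at s
  obtain ⟨a, ha, b, hb, c, hc, hac, hbc, h1, h2⟩ := hsat _ hsF
  rcases Finset.mem_insert.1 hc with rfl | hcF
  · have haF : a ∈ F := by
      rcases Finset.mem_insert.1 ha with rfl | h
      · exact absurd hac (ssubset_irrefl _)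
      · exact h
    have hbF : b ∈ F := by
      rcases Finset.mem_insert.1 hb with rfl | h
      · exact absurd hbc (ssubset_irrefl _)
      · exact h
    rcases free_of hfree haF hbF hvF (sstrans hac hsv) (sstrans hbc hsv) with h | h
    · exact h1 h
    · exact h2 h
  · rcases Finset.mem_insert.1 ha with rfl | haF
    · rcases Finset.mem_insert.1 hb with rfl | hbF
      · exact h1 (Finset.Subset.refl _)
      · exact cont c hcF b hbF hac hbc h1 h2
    · rcases Finset.mem_insert.1 hb with rfl | hbF
      · exact cont c hcF a haF hbc hac h2 h1
      · exact hfree ⟨a, haF, b, hbF, c, hcF, hac, hbc, h1, h2⟩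

/-- Every Λ₂-saturated family has at least `n + 1` members. -/
lemma L2Saturated.card_bound {F : Finset (Finset (Fin n))} (hF : L2Saturated F) :
    n + 1 ≤ F.card := by
  classical
  obtain ⟨hfree, hsat⟩ := hF
  have hempty : (∅ : Finset (Fin n)) ∈ F := L2Saturated.empty_mem ⟨hfree, hsat⟩
  have claimB : ∀ x : Fin n, ∃ e, e ∈ F ∧ x ∈ e ∧ e.erase x ∈ F := by
    intro x
    by_contra h
    push_neg at h
    exact no_bad_x hfree hsat hempty x h
  set g : Fin n → Finset (Fin n) := fun x => (claimB x).choose with hg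
  have hgspec : ∀ x, g x ∈ F ∧ x ∈ g x ∧ (g x).erase x ∈ F := fun x => (claimB x).choose_spec
  have hinj : Set.InjOn g (Finset.univ : Finset (Fin n)) := by
    intro x _ y _ hxy
    by_contra hne
    obtain ⟨hxF, hxm, hxe⟩ := hgspec x
    obtain ⟨hyF, hym, hye⟩ := hgspec y
    rw [hxy] at hxm hxe
    have hyne : y ≠ x := fun h => hne h.symm
    have hi1 : ¬ (g y).erase x ⊆ (g y).erase y := fun hs =>
      Finset.notMem_erase y (g y) (hs (Finset.mem_erase.2 ⟨hyne, hym⟩))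
    have hi2 : ¬ (g y).erase y ⊆ (g y).erase x := fun hs =>
      Finset.notMem_erase x (g y) (hs (Finset.mem_erase.2 ⟨hne, hxm⟩))
    exact hfree ⟨(g y).erase x, hxe, (g y).erase y, hye, g y, hyF,
      Finset.erase_ssubset hxm, Finset.erase_ssubset hym, hi1, hi2⟩
  have hmaps : ∀ x ∈ (Finset.univ : Finset (Fin n)), g x ∈ F.erase ∅ := by
    intro x _
    obtain ⟨hxF, hxm, _⟩ := hgspec x
    refine Finset.mem_erase.2 ⟨fun h => ?_, hxF⟩
    rw [h] at hxm
    exact Finset.notMem_empty x hxm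
  have hcard : (Finset.univ : Finset (Fin n)).card ≤ (F.erase ∅).card :=
    Finset.card_le_card_of_injOn g hmaps hinj
  rw [Finset.card_univ, Fintype.card_fin] at hcard
  have h1 : (F.erase ∅).card + 1 = F.card := Finset.card_erase_add_one hempty
  omega

/-- A Λ₂-saturated family exists (a Λ₂-free family of maximum cardinality). -/
lemma exists_L2Saturated (n : ℕ) : ∃ F : Finset (Finset (Fin n)), L2Saturated F := by
  classical
  have hne : ((Finset.univ : Finset (Finset (Finset (Fin n)))).filter
      (fun G => ¬ L2Copy G)).Nonempty := by
    refine ⟨∅, Finset.mem_filter.2 ⟨Finset.mem_univ _, fun h => ?_⟩⟩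
    obtain ⟨a, ha, -⟩ := h
    exact Finset.notMem_empty a ha
  obtain ⟨F, hF, hmax⟩ := Finset.exists_max_image _ Finset.card hne
  have hfree : ¬ L2Copy F := (Finset.mem_filter.1 hF).2
  refine ⟨F, hfree, fun S hS => ?_⟩
  by_contra hno
  have hmem : insert S F ∈ (Finset.univ : Finset (Finset (Finset (Fin n)))).filter
      (fun G => ¬ L2Copy G) := Finset.mem_filter.2 ⟨Finset.mem_univ _, hno⟩
  have hle := hmax _ hmem
  rw [Finset.card_insert_of_notMem hS] at hle
  omega

end Aux

/-- For `n ≥ 2`, every induced-`Λ₂`-saturated family in `B_n` is also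
induced-`D₂`-saturated and contains `∅`; consequently `isat(n, Λ₂) ≥ n + 1`. -/
theorem stmt13 {n : ℕ} (hn : 2 ≤ n) :
    (∀ F : Finset (Finset (Fin n)), L2Saturated F → D2Saturated F ∧ ∅ ∈ F) ∧
    n + 1 ≤ sInf {k | ∃ F : Finset (Finset (Fin n)), L2Saturated F ∧ F.card = k} := by
  constructor
  · intro F hF
    have hempty : (∅ : Finset (Fin n)) ∈ F := hF.empty_mem
    refine ⟨⟨fun hD => hF.1 ?_, fun S hS => ?_⟩, hempty⟩
    · obtain ⟨A, hA, B, hB, C, hC, D, hD, hAB, hBD, hAC, hCD, hBC⟩ := hD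
      exact ⟨B, hB, C, hC, D, hD, hBD, hCD, hBC⟩
    · obtain ⟨a, ha, b, hb, c, hc, hac, hbc, h1, h2⟩ := hF.2 S hS
      have hane : (∅ : Finset (Fin n)) ⊂ a := by
        refine Finset.empty_ssubset.2 (Finset.nonempty_iff_ne_empty.2 (fun h => h1 ?_))
        rw [h]
        exact Finset.empty_subset b
      have hbne : (∅ : Finset (Fin n)) ⊂ b := by
        refine Finset.empty_ssubset.2 (Finset.nonempty_iff_ne_empty.2 (fun h => h2 ?_))
        rw [h]
        exact Finset.empty_subset a
      exact ⟨∅, Finset.mem_insert_of_mem hempty, a, ha, b, hb, c, hc,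
        hane, hac, hbne, hbc, h1, h2⟩
  · obtain ⟨F₀, hF₀⟩ := exists_L2Saturated n
    have hne : {k | ∃ F : Finset (Finset (Fin n)), L2Saturated F ∧ F.card = k}.Nonempty :=
      ⟨F₀.card, F₀, hF₀, rfl⟩
    obtain ⟨F, hF, hcard⟩ := Nat.sInf_mem hne
    rw [← hcard]
    exact hF.card_bound
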